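/- Let C be the set of subsets σ_1, ..., σ_k of {1, ..., n}, and define U_j = ⋃_{i : j ∈ σ_i} S_i in ℝ^{k-1}. Then for every nonempty σ ⊆ {1, ..., n}, the intersection ⋂_{j ∈ σ} U_j equals ⋃_{i : σ ⊆ σ_i} S_i. -/
import Mathlib


open Set

/-- The points {0, e_1, ..., e_t} in ℝ^d, where e_j = Pi.single (j-1) 1. -/
noncomputable def basisPts (d t : ℕ) : Set (Fin d → ℝ) :=
  insert 0 {x | ∃ m : Fin d, (m : ℕ) < t ∧ x = Pi.single m 1}

/-- F d t = conv{0, e_1, ..., e_t}. -/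
noncomputable def F (d t : ℕ) : Set (Fin d → ℝ) := convexHull ℝ (basisPts d t)

/-- S d i = conv{0, e_1, ..., e_{i-1}} \ conv{0, e_1, ..., e_{i-2}}, with S d 1 = {0}. -/
noncomputable def S (d i : ℕ) : Set (Fin d → ℝ) :=
  F d (i - 1) \ (if i ≤ 1 then ∅ else F d (i - 2))

lemma F_mono {d t t' : ℕ} (h : t ≤ t') : F d t ⊆ F d t' := by
  apply convexHull_mono
  rintro x (rfl | ⟨m, hm, rfl⟩)
  · exact Or.inl rfl
  · exact Or.inr ⟨m, lt_of_lt_of_le hm h, rfl⟩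

lemma S_disjoint {d i i' : ℕ} (h : i < i') :
    Disjoint (S d (i + 1)) (S d (i' + 1)) := by
  have hi' : ¬ (i' + 1 ≤ 1) := by omega
  refine Set.disjoint_left.mpr fun x hx hx' => ?_
  have h1 : x ∈ F d i := by
    have := hx.1; simpa using this
  have h2 : x ∉ F d (i' - 1) := by
    have := hx'.2
    simp only [S, hi', if_false] at hx'
    have : i' + 1 - 2 = i' - 1 := by omega
    rw [this] at hx'
    exact hx'.2
  exact h2 (F_mono (by omega) h1)

theorem iInter_U_eq_union_S (n k : ℕ) (σs : Fin k → Finset (Fin n))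
    (hne : ∀ i, (σs i).Nonempty)
    (U : Fin n → Set (Fin (k - 1) → ℝ))
    (hU : ∀ j, U j = ⋃ i, ⋃ (_ : j ∈ σs i), S (k - 1) ((i : ℕ) + 1))
    (σ : Finset (Fin n)) (hσ : σ.Nonempty) :
    (⋂ j ∈ σ, U j) = ⋃ i, ⋃ (_ : σ ⊆ σs i), S (k - 1) ((i : ℕ) + 1) := by
  ext x
  simp only [mem_iInter, mem_iUnion, hU]
  constructor
  · intro hx
    obtain ⟨j0, hj0⟩ := hσ
    obtain ⟨i0, hji0, hxi0⟩ := hx j0 hj0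
    refine ⟨i0, fun j hj => ?_, hxi0⟩
    obtain ⟨i, hji, hxi⟩ := hx j hj
    have : i = i0 := by
      by_contra hne'
      rcases lt_or_gt_of_ne (fun h => hne' (Fin.ext h) : (i : ℕ) ≠ (i0 : ℕ)) with h | h
      · exact (S_disjoint h).ne_of_mem hxi hxi0 rfl
      · exact (S_disjoint h).ne_of_mem hxi0 hxi rfl
    exact this ▸ hji
  · rintro ⟨i, hsub, hxi⟩
    exact fun j hj => ⟨i, hsub hj, hxi⟩
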